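/- Let 0 < r < 1, let H be a complex Hilbert space, and let T be a bounded linear operator on H. Suppose H₁ and H₂ are closed, mutually orthogonal subspaces of H with H = H₁ ⊕ H₂, both invariant under T and under T*, such that the restriction of T to H₁ is a unitary operator on H₁ and such that ‖Th‖ = r‖h‖ for all h ∈ H₂ and T maps H₂ onto H₂ (i.e. r⁻¹T restricted to H₂ is unitary). Then T is an 𝔸_r-unitary: T is normal and σ(T) ⊆ {z ∈ ℂ : |z| = 1 or |z| = r}. -/

import Mathlib

open ContinuousLinearMap

/-- `T` is an `𝔸_r`-unitary: a normal operator with spectrum in the boundary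
`{z : |z| = 1} ∪ {z : |z| = r}` of the annulus. -/
noncomputable def IsArUnitary {K : Type*} [NormedAddCommGroup K] [InnerProductSpace ℂ K]
    [CompleteSpace K] (r : ℝ) (N : K →L[ℂ] K) : Prop :=
  adjoint N * N = N * adjoint N ∧
  spectrum ℂ N ⊆ {z : ℂ | ‖z‖ = 1 ∨ ‖z‖ = r}
set_option maxHeartbeats 1000000 in
theorem stmt8 {H : Type*} [NormedAddCommGroup H] [InnerProductSpace ℂ H] [CompleteSpace H]
    (r : ℝ) (hr0 : 0 < r) (hr1 : r < 1) (T : H →L[ℂ] H)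
    (H₁ H₂ : Submodule ℂ H)
    (hC₁ : IsClosed (H₁ : Set H)) (hC₂ : IsClosed (H₂ : Set H))
    (horth : ∀ h₁ ∈ H₁, ∀ h₂ ∈ H₂, (inner ℂ h₁ h₂ : ℂ) = 0)
    (hsum : H₁ ⊔ H₂ = ⊤)
    (hinv₁ : ∀ h ∈ H₁, T h ∈ H₁) (hinv₁' : ∀ h ∈ H₁, adjoint T h ∈ H₁)
    (hinv₂ : ∀ h ∈ H₂, T h ∈ H₂) (hinv₂' : ∀ h ∈ H₂, adjoint T h ∈ H₂)
    (hiso₁ : ∀ h ∈ H₁, ‖T h‖ = ‖h‖) (hsurj₁ : ∀ h ∈ H₁, ∃ h' ∈ H₁, T h' = h)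
    (hiso₂ : ∀ h ∈ H₂, ‖T h‖ = r * ‖h‖) (hsurj₂ : ∀ h ∈ H₂, ∃ h' ∈ H₂, T h' = h) :
    IsArUnitary r T := by
  classical
  -- every vector decomposes
  have hmem : ∀ x : H, ∃ a ∈ H₁, ∃ b ∈ H₂, a + b = x := by
    intro x
    have hx : x ∈ H₁ ⊔ H₂ := hsum ▸ Submodule.mem_top
    obtain ⟨a, ha, b, hb, h⟩ := Submodule.mem_sup.mp hx
    exact ⟨a, ha, b, hb, h⟩
  -- two operators agreeing on H₁ and H₂ are equal
  have hext : ∀ (A B : H →L[ℂ] H), (∀ x ∈ H₁, A x = B x) → (∀ x ∈ H₂, A x = B x) → A = B := by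
    intro A B h1 h2
    ext x
    obtain ⟨a, ha, b, hb, rfl⟩ := hmem x
    simp [map_add, h1 a ha, h2 b hb]
  -- polarization: T*T acts as c² on an invariant subspace where T scales norms by c
  have key : ∀ (c : ℝ) (M : Submodule ℂ H), (∀ h ∈ M, T h ∈ M) → (∀ h ∈ M, adjoint T h ∈ M) →
      (∀ h ∈ M, ‖T h‖ = c * ‖h‖) → ∀ x ∈ M, adjoint T (T x) = ((c : ℂ) ^ 2) • x := by
    intro c M hTM hTaM hnorm x hx
    set L : H →ₗ[ℂ] H :=
      ((adjoint T).comp T : H →L[ℂ] H).toLinearMap - ((c : ℂ) ^ 2) • LinearMap.id with hL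
    have hLz : ∀ z ∈ M, (inner ℂ (L z) z : ℂ) = 0 := by
      intro z hz
      have h1 : (inner ℂ (adjoint T (T z)) z : ℂ) = inner ℂ (T z) (T z) :=
        adjoint_inner_left T z (T z)
      have h2 : (inner ℂ (T z) (T z) : ℂ) = (‖T z‖ : ℂ) ^ 2 := by
        rw [inner_self_eq_norm_sq_to_K]; rfl
      have h3 : (inner ℂ z z : ℂ) = (‖z‖ : ℂ) ^ 2 := by
        rw [inner_self_eq_norm_sq_to_K]; rfl
      simp only [hL, LinearMap.sub_apply, ContinuousLinearMap.coe_coe, comp_apply,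
        LinearMap.smul_apply, LinearMap.id_apply, inner_sub_left, inner_smul_left,
        h1, h2, h3, hnorm z hz]
      rw [map_pow, Complex.conj_ofReal]
      push_cast
      ring
    have hLxy : ∀ u ∈ M, ∀ v ∈ M, (inner ℂ (L v) u : ℂ) = 0 := by
      intro u hu v hv
      rw [inner_map_polarization]
      rw [hLz _ (M.add_mem hu hv), hLz _ (M.sub_mem hu hv),
        hLz _ (M.add_mem hu (M.smul_mem _ hv)), hLz _ (M.sub_mem hu (M.smul_mem _ hv))]
      simp
    have hvM : L x ∈ M := by
      have : adjoint T (T x) ∈ M := hTaM _ (hTM _ hx)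
      simpa [hL] using M.sub_mem this (M.smul_mem ((c : ℂ) ^ 2) hx)
    have h0 : L x = 0 := by
      have := hLxy (L x) hvM x hx
      exact inner_self_eq_zero.mp this
    have := sub_eq_zero.mp (by simpa [hL] using h0)
    simpa using this
  have k1 : ∀ x ∈ H₁, adjoint T (T x) = x := by
    intro x hx
    have := key 1 H₁ hinv₁ hinv₁' (fun h hh => by rw [hiso₁ h hh]; ring) x hx
    simpa using this
  have k2 : ∀ x ∈ H₂, adjoint T (T x) = ((r : ℂ) ^ 2) • x :=
    key r H₂ hinv₂ hinv₂' hiso₂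
  have k1' : ∀ x ∈ H₁, T (adjoint T x) = x := by
    intro x hx
    obtain ⟨h', hh', rfl⟩ := hsurj₁ x hx
    rw [k1 h' hh']
  have k2' : ∀ x ∈ H₂, T (adjoint T x) = ((r : ℂ) ^ 2) • x := by
    intro x hx
    obtain ⟨h', hh', rfl⟩ := hsurj₂ x hx
    rw [k2 h' hh', map_smul]
  -- normality
  have hnormal : adjoint T * T = T * adjoint T := by
    apply hext
    · intro x hx
      simp [ContinuousLinearMap.mul_apply, k1 x hx, k1' x hx]
    · intro x hx
      simp [ContinuousLinearMap.mul_apply, k2 x hx, k2' x hx]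
  -- (T*T - 1)(T*T - r²) = 0
  have hA : (adjoint T * T - 1) * (adjoint T * T - algebraMap ℂ (H →L[ℂ] H) ((r : ℂ) ^ 2)) = 0 := by
    rw [Algebra.algebraMap_eq_smul_one]
    apply hext
    · intro x hx
      simp [ContinuousLinearMap.mul_apply, ContinuousLinearMap.sub_apply, map_sub, map_smul,
        k1 x hx, smul_sub]
    · intro x hx
      simp [ContinuousLinearMap.mul_apply, ContinuousLinearMap.sub_apply, map_sub, map_smul,
        k2 x hx]
  haveI hTn : IsStarNormal T := ⟨by rw [Commute, SemiconjBy, star_eq_adjoint]; exact hnormal⟩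
  refine ⟨hnormal, ?_⟩
  intro z hz
  -- functional calculus
  set f : ℂ → ℂ := fun w => (star w * w - 1) * (star w * w - (r : ℂ) ^ 2) with hfdef
  have hq : cfc (fun w : ℂ => star w * w) T = adjoint T * T := by
    rw [cfc_mul _ _ T (by fun_prop) (by fun_prop), cfc_star_id (R := ℂ) (a := T) hTn, cfc_id' ℂ T hTn, star_eq_adjoint]
  have hcfc : cfc f T = (adjoint T * T - 1) *
      (adjoint T * T - algebraMap ℂ (H →L[ℂ] H) ((r : ℂ) ^ 2)) := by
    rw [hfdef]
    rw [cfc_mul _ _ T (by fun_prop) (by fun_prop)]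
    rw [cfc_sub (fun w : ℂ => star w * w) (fun _ => (1 : ℂ)) T (by fun_prop) (by fun_prop)]
    rw [cfc_sub (fun w : ℂ => star w * w) (fun _ => ((r : ℂ) ^ 2)) T (by fun_prop) (by fun_prop)]
    rw [hq, cfc_const _ T hTn, cfc_const _ T hTn, map_one]
  have hzero : cfc f T = 0 := by rw [hcfc, hA]
  have hzmem : f z ∈ spectrum ℂ (cfc f T) := by
    rw [cfc_map_spectrum f T]
    exact ⟨z, hz, rfl⟩
  rw [hzero] at hzmem
  have hf0 : f z = 0 := by
    by_contra hne
    have : IsUnit (algebraMap ℂ (H →L[ℂ] H) (f z) - 0) := by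
      rw [sub_zero]
      exact (isUnit_iff_ne_zero.mpr hne).map (algebraMap ℂ (H →L[ℂ] H))
    exact spectrum.mem_iff.mp hzmem this
  -- translate to |z|
  have hstar : (star z * z : ℂ) = ((Complex.normSq z : ℝ) : ℂ) := by
    rw [Complex.star_def, mul_comm, Complex.mul_conj]
  rw [hfdef] at hf0
  simp only [hstar] at hf0
  have hreal : ((Complex.normSq z - 1) * (Complex.normSq z - r ^ 2) : ℝ) = 0 := by
    have : (((Complex.normSq z - 1) * (Complex.normSq z - r ^ 2) : ℝ) : ℂ) = 0 := by
      push_cast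
      convert hf0 using 1
    exact_mod_cast this
  have habs : ‖z‖ ^ 2 = Complex.normSq z := Complex.sq_norm z
  have hnn : 0 ≤ ‖z‖ := norm_nonneg z
  rcases mul_eq_zero.mp hreal with h | h
  · left
    have h1 : ‖z‖ ^ 2 = 1 := by rw [habs]; linarith
    nlinarith [sq_nonneg (‖z‖ - 1), sq_nonneg (‖z‖ + 1)]
  · right
    have h1 : ‖z‖ ^ 2 = r ^ 2 := by rw [habs]; linarith
    nlinarith [sq_nonneg (‖z‖ - r), sq_nonneg (‖z‖ + r)]
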